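/- arXiv:2106.03440 — 5 statements merged into one kernel-verified Lean document; each statement's English description precedes it below -/
import Mathlib

section
/- Let R be a commutative ring and n ≥ 1. For each 1 ≤ k' ≤ k ≤ n, let Φ(k,k') ∈ R[x_1,...,x_n] be the sum of all monomials of degree k in the variables x_1,...,x_{n-k'+1}. Then the ideal generated by the complete homogeneous symmetric polynomials h_1,...,h_n in n variables equals the ideal generated by Φ(1,1), Φ(2,2), ..., Φ(n,n). -/
/-- Sum of all monomials of degree `a` in the first `b` variables `x_1, …, x_b`
of `R[x_1, …, x_n]`. -/
noncomputable def Hp (R : Type*) [CommRing R] (n a b : ℕ) : MvPolynomial (Fin n) R :=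
  ∑ m ∈ (Finset.univ.filter fun i : Fin n => (i : ℕ) < b).sym a,
    ((m : Multiset (Fin n)).map MvPolynomial.X).prod

/-- `Φ(k, k')`: the sum of all monomials of degree `k` in the variables
`x_1, …, x_{n-k'+1}`. In particular `h_k = Φ(k, 1)`. -/
noncomputable def Phi (R : Type*) [CommRing R] (n k k' : ℕ) : MvPolynomial (Fin n) R :=
  Hp R n k (n - k' + 1)

lemma Hp_expand (R : Type*) [CommRing R] (n a b : ℕ) (hb : b < n) :
    Hp R n a (b + 1) = ∑ i ∈ Finset.range (a + 1),
      (MvPolynomial.X ⟨b, hb⟩ : MvPolynomial (Fin n) R) ^ i * Hp R n (a - i) b := by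
  classical
  set x : Fin n := ⟨b, hb⟩ with hxdef
  set t : Finset (Fin n) := Finset.univ.filter (fun i : Fin n => (i : ℕ) < b) with ht
  have hx : x ∉ t := by simp [ht, hxdef]
  have hins : (Finset.univ.filter fun i : Fin n => (i : ℕ) < b + 1) = insert x t := by
    ext j
    simp [ht, hxdef, Nat.lt_succ_iff_lt_or_eq, Fin.ext_iff, or_comm]
    omega
  have key : ∀ (p : Σ i : Fin (a + 1), t.sym (a - i)),
      ((((Finset.symInsertEquiv hx).symm p : Sym (Fin n) a) : Multiset (Fin n)).map
          MvPolynomial.X).prod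
        = (MvPolynomial.X x : MvPolynomial (Fin n) R) ^ (p.1 : ℕ) *
            ((p.2.1 : Multiset (Fin n)).map MvPolynomial.X).prod := by
    rintro ⟨i, m, hm⟩
    simp only [Finset.symInsertEquiv_symm_apply_coe]
    rw [Sym.coe_fill, Multiset.map_add, Multiset.prod_add, Sym.coe_replicate,
      Multiset.map_replicate, Multiset.prod_replicate]
    ring
  rw [Hp, hins, ← Finset.sum_coe_sort]
  rw [← Equiv.sum_comp (Finset.symInsertEquiv hx).symm
      (fun m : ((insert x t).sym a : Finset (Sym (Fin n) a)) =>
        ((m : Multiset (Fin n)).map MvPolynomial.X).prod)]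
  rw [← Finset.univ_sigma_univ, Finset.sum_sigma]
  have : ∀ i : Fin (a + 1),
      (∑ s : {m // m ∈ t.sym (a - (i : ℕ))},
        ((((Finset.symInsertEquiv hx).symm ⟨i, s⟩ : Sym (Fin n) a) : Multiset (Fin n)).map
          MvPolynomial.X).prod)
      = (MvPolynomial.X x : MvPolynomial (Fin n) R) ^ (i : ℕ) * Hp R n (a - i) b := by
    intro i
    rw [Fintype.sum_congr _ _ (fun s => key ⟨i, s⟩)]
    simp only [← Finset.mul_sum]
    rw [Finset.sum_coe_sort (t.sym (a - (i : ℕ)))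
      (fun m : Sym (Fin n) (a - (i : ℕ)) => ((m : Multiset (Fin n)).map MvPolynomial.X).prod)]
    rfl
  rw [Fintype.sum_congr _ _ this]
  exact Fin.sum_univ_eq_sum_range
    (fun i => (MvPolynomial.X x : MvPolynomial (Fin n) R) ^ i * Hp R n (a - i) b) (a + 1)

lemma Hp_rec (R : Type*) [CommRing R] (n a b : ℕ) (ha : 1 ≤ a) (hb : b < n) :
    Hp R n a (b + 1) = Hp R n a b
      + MvPolynomial.X ⟨b, hb⟩ * Hp R n (a - 1) (b + 1) := by
  obtain ⟨c, rfl⟩ : ∃ c, a = c + 1 := ⟨a - 1, (Nat.succ_pred_eq_of_pos ha).symm⟩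
  rw [Hp_expand R n (c + 1) b hb]
  have h1 : c + 1 - 1 = c := rfl
  rw [h1, Hp_expand R n c b hb]
  rw [Finset.sum_range_succ']
  simp only [pow_zero, one_mul, Nat.sub_zero]
  rw [add_comm]
  congr 1
  rw [Finset.mul_sum]
  refine Finset.sum_congr rfl fun i _ => ?_
  rw [Nat.succ_sub_succ_eq_sub, pow_succ]
  ring

lemma Phi_rec (R : Type*) [CommRing R] (n k k' : ℕ) (hk : 1 ≤ k) (hk' : 1 ≤ k')
    (hk'n : k' + 1 ≤ n) :
    Phi R n k k' = Phi R n k (k' + 1)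
      + MvPolynomial.X ⟨n - k', Nat.sub_lt (by omega) (by omega)⟩ * Phi R n (k - 1) k' := by
  unfold Phi
  have h1 : n - (k' + 1) + 1 = n - k' := by omega
  rw [h1]
  exact Hp_rec R n k (n - k') hk (Nat.sub_lt (by omega) (by omega))

/-- The ideal generated by `h_1, …, h_m`. -/
noncomputable def Jid (R : Type*) [CommRing R] (n m : ℕ) : Ideal (MvPolynomial (Fin n) R) :=
  Ideal.span { p : MvPolynomial (Fin n) R | ∃ l, 1 ≤ l ∧ l ≤ m ∧ p = Phi R n l 1 }

lemma Jid_mono (R : Type*) [CommRing R] (n : ℕ) {m m' : ℕ} (h : m ≤ m') :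
    Jid R n m ≤ Jid R n m' :=
  Ideal.span_mono (fun p ⟨l, h1, h2, h3⟩ => ⟨l, h1, le_trans h2 h, h3⟩)

lemma diff_mem (R : Type*) [CommRing R] (n : ℕ) :
    ∀ k k' : ℕ, 1 ≤ k' → k' ≤ k → k ≤ n →
      Phi R n k k' - Phi R n k 1 ∈ Jid R n (k - 1) := by
  intro k
  induction k using Nat.strong_induction_on with
  | _ k ih =>
    intro k'
    induction k' with
    | zero => intro h; omega
    | succ k' ihk' =>
      intro _ hk'k hkn
      rcases Nat.eq_zero_or_pos k' with rfl | hpos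
      · simp
      · have hk : 1 ≤ k := by omega
        obtain ⟨j, hrec⟩ : ∃ j : Fin n, Phi R n k k' = Phi R n k (k' + 1)
            + MvPolynomial.X j * Phi R n (k - 1) k' :=
          ⟨_, Phi_rec R n k k' hk hpos (by omega)⟩
        have h1 : Phi R n k k' - Phi R n k 1 ∈ Jid R n (k - 1) :=
          ihk' hpos (by omega) hkn
        have h2 : Phi R n (k - 1) k' ∈ Jid R n (k - 1) := by
          have hd : Phi R n (k - 1) k' - Phi R n (k - 1) 1 ∈ Jid R n (k - 1 - 1) :=
            ih (k - 1) (by omega) k' hpos (by omega) (by omega)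
          have hd' : Phi R n (k - 1) k' - Phi R n (k - 1) 1 ∈ Jid R n (k - 1) :=
            Jid_mono R n (by omega) hd
          have hg : Phi R n (k - 1) 1 ∈ Jid R n (k - 1) :=
            Ideal.subset_span ⟨k - 1, by omega, le_refl _, rfl⟩
          simpa using (Jid R n (k - 1)).add_mem hd' hg
        have heq : Phi R n k (k' + 1) - Phi R n k 1
            = (Phi R n k k' - Phi R n k 1) - MvPolynomial.X j * Phi R n (k - 1) k' := by
          rw [hrec]; ring
        rw [heq]
        exact Ideal.sub_mem _ h1 (Ideal.mul_mem_left _ _ h2)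

theorem stmt4 (R : Type*) [CommRing R] (n : ℕ) (hn : 1 ≤ n) :
    Ideal.span { p : MvPolynomial (Fin n) R | ∃ l, 1 ≤ l ∧ l ≤ n ∧ p = Phi R n l 1 } =
      Ideal.span { p : MvPolynomial (Fin n) R | ∃ k, 1 ≤ k ∧ k ≤ n ∧ p = Phi R n k k } := by
  set K : Ideal (MvPolynomial (Fin n) R) :=
    Ideal.span { p : MvPolynomial (Fin n) R | ∃ k, 1 ≤ k ∧ k ≤ n ∧ p = Phi R n k k } with hK
  have hgen : ∀ l, 1 ≤ l → l ≤ n → Phi R n l 1 ∈ K := by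
    intro l
    induction l using Nat.strong_induction_on with
    | _ l ih =>
      intro hl1 hln
      have hJ : Jid R n (l - 1) ≤ K := by
        rw [Jid, Ideal.span_le]
        rintro p ⟨l', h1', h2', rfl⟩
        exact ih l' (by omega) h1' (by omega)
      have heq : Phi R n l 1 = Phi R n l l - (Phi R n l l - Phi R n l 1) := by ring
      rw [heq]
      exact Ideal.sub_mem _ (Ideal.subset_span ⟨l, hl1, hln, rfl⟩)
        (hJ (diff_mem R n l l hl1 le_rfl hln))
  apply le_antisymm
  · rw [Ideal.span_le]
    rintro p ⟨l, h1, h2, rfl⟩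
    exact hgen l h1 h2
  · rw [Ideal.span_le]
    rintro p ⟨k, h1, h2, rfl⟩
    have hd : Phi R n k k - Phi R n k 1 ∈ Jid R n (k - 1) :=
      diff_mem R n k k h1 le_rfl h2
    have hd' : Phi R n k k - Phi R n k 1 ∈
        Ideal.span { p : MvPolynomial (Fin n) R | ∃ l, 1 ≤ l ∧ l ≤ n ∧ p = Phi R n l 1 } :=
      Jid_mono R n (by omega) hd
    have hg : Phi R n k 1 ∈
        Ideal.span { p : MvPolynomial (Fin n) R | ∃ l, 1 ≤ l ∧ l ≤ n ∧ p = Phi R n l 1 } :=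
      Ideal.subset_span ⟨k, h1, h2, rfl⟩
    simpa using Ideal.add_mem _ hd' hg
end

section
/- For n ≥ 1, 1 ≤ i ≤ n, and j ≥ 1, define γ̃_i^{(j)} = Σ_{c_1+...+c_n = j} (c_i+1) γ_1^{c_1}···γ_n^{c_n}. Then in the quotient ring Z[γ_1,...,γ_n]/⟨h_1,...,h_n, h_{n+1}⟩ (quotient by complete homogeneous symmetric polynomials of degrees 1 through n+1), the image of γ̃_i^{(j)} equals the image of γ_i^{j-1}·(γ_1+...+γ_n+γ_i), i.e. γ̃_i^{(j)} ≡ γ_i^{j-1}·γ̃_i^{(1)} modulo the ideal generated by complete homogeneous symmetric polynomials of positive degree. -/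
/-- The complete homogeneous symmetric polynomial of degree `a` in
`γ_1, …, γ_n` (all `n` variables). -/
noncomputable def hsym (n a : ℕ) : MvPolynomial (Fin n) ℤ :=
  ∑ m ∈ (Finset.univ : Finset (Fin n)).sym a,
    ((m : Multiset (Fin n)).map MvPolynomial.X).prod

/-- `γ̃_i^{(j)} = Σ_{c_1+⋯+c_n = j} (c_i + 1) γ_1^{c_1} ⋯ γ_n^{c_n}`. -/
noncomputable def gtldPow (n : ℕ) (i : Fin n) (j : ℕ) : MvPolynomial (Fin n) ℤ :=
  ∑ c ∈ Finset.Nat.antidiagonalTuple n j,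
    MvPolynomial.C ((c i : ℤ) + 1) * ∏ t : Fin n, MvPolynomial.X t ^ c t

open Finset MvPolynomial

noncomputable def hA (n m : ℕ) : MvPolynomial (Fin n) ℤ :=
  ∑ c ∈ Finset.Nat.antidiagonalTuple n m, ∏ t : Fin n, X t ^ c t

lemma hsym_eq_hsymm (n a : ℕ) : hsym n a = MvPolynomial.hsymm (Fin n) ℤ a := by
  rw [hsym, MvPolynomial.hsymm, Finset.sym_univ]
  rfl

lemma count_repsum {n : ℕ} (c : Fin n → ℕ) (t : Fin n) :
    Multiset.count t (∑ s : Fin n, Multiset.replicate (c s) s) = c t := by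
  rw [Multiset.count_sum']
  simp [Multiset.count_replicate]

lemma card_repsum {n : ℕ} (c : Fin n → ℕ) :
    Multiset.card (∑ s : Fin n, Multiset.replicate (c s) s) = ∑ s : Fin n, c s := by
  induction (Finset.univ : Finset (Fin n)) using Finset.induction with
  | empty => simp
  | insert _ _ h ih => simp [Finset.sum_insert h, ih]

lemma prod_count (n : ℕ) (s : Multiset (Fin n)) :
    (s.map (X (R := ℤ))).prod = ∏ t : Fin n, X t ^ Multiset.count t s := by
  rw [Finset.prod_multiset_map_count]
  apply Finset.prod_subset (Finset.subset_univ _)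
  intro x _ hx
  rw [Multiset.count_eq_zero_of_notMem (by simpa using hx), pow_zero]

lemma repsum_count {n : ℕ} (s : Multiset (Fin n)) :
    (∑ t : Fin n, Multiset.replicate (Multiset.count t s) t) = s := by
  rw [Multiset.ext]
  intro t
  exact count_repsum _ t

lemma hA_eq_hsym (n m : ℕ) : hA n m = hsym n m := by
  rw [hA, hsym]
  refine Finset.sum_bij'
    (fun c hc => (⟨∑ s : Fin n, Multiset.replicate (c s) s, by
      rw [card_repsum]; exact Finset.Nat.mem_antidiagonalTuple.mp hc⟩ : Sym (Fin n) m))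
    (fun s _ => fun t => Multiset.count t (s : Multiset (Fin n))) ?_ ?_ ?_ ?_ ?_
  · intro c hc
    exact Finset.mem_sym_iff.mpr (fun _ _ => Finset.mem_univ _)
  · intro s _
    rw [Finset.Nat.mem_antidiagonalTuple]
    rw [← card_repsum, repsum_count]
    exact s.2
  · intro c hc
    funext t
    exact count_repsum c t
  · intro s hs
    apply Sym.ext
    exact repsum_count _
  · intro c hc
    rw [prod_count]
    refine Finset.prod_congr rfl fun t _ => ?_
    show X t ^ c t = X t ^ Multiset.count t (∑ s : Fin n, Multiset.replicate (c s) s)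
    rw [count_repsum]

lemma hA_zero (n : ℕ) : hA n 0 = 1 := by
  rw [hA, Finset.Nat.antidiagonalTuple_zero_right]
  simp

lemma gtld_zero (n : ℕ) (i : Fin n) : gtldPow n i 0 = 1 := by
  rw [gtldPow, Finset.Nat.antidiagonalTuple_zero_right]
  simp

lemma gtld_succ (n : ℕ) (i : Fin n) (j : ℕ) :
    gtldPow n i (j + 1) = X i * gtldPow n i j + hA n (j + 1) := by
  rw [gtldPow, hA]
  have : ∀ c : Fin n → ℕ, (MvPolynomial.C ((c i : ℤ) + 1) : MvPolynomial (Fin n) ℤ)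
      = MvPolynomial.C (c i : ℤ) + 1 := by intro c; rw [map_add, map_one]
  simp_rw [this, add_mul, one_mul, Finset.sum_add_distrib]
  congr 1
  rw [gtldPow, Finset.mul_sum]
  rw [← Finset.sum_filter_of_ne (p := fun c => c i ≠ 0)
    (by
      intro c hc h0
      intro h
      apply h0
      rw [h]
      simp)]
  · refine Finset.sum_bij'
      (fun c _ => Function.update c i (c i - 1))
      (fun c _ => Function.update c i (c i + 1)) ?_ ?_ ?_ ?_ ?_
    · intro c hc
      rw [Finset.mem_filter] at hc
      obtain ⟨hc, hne⟩ := hc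
      rw [Finset.Nat.mem_antidiagonalTuple] at hc ⊢
      rw [Finset.sum_update_of_mem (Finset.mem_univ i)]
      rw [← Finset.add_sum_erase _ c (Finset.mem_univ i)] at hc
      have : Finset.univ \ {i} = Finset.univ.erase i := by
        rw [Finset.erase_eq]
      rw [this]
      omega
    · intro c hc
      rw [Finset.Nat.mem_antidiagonalTuple] at hc
      rw [Finset.mem_filter, Finset.Nat.mem_antidiagonalTuple]
      constructor
      · rw [Finset.sum_update_of_mem (Finset.mem_univ i)]
        rw [← Finset.add_sum_erase _ c (Finset.mem_univ i)] at hc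
        rw [Finset.erase_eq] at hc
        omega
      · simp
    · intro c hc
      rw [Finset.mem_filter] at hc
      funext t
      rcases eq_or_ne t i with rfl | ht
      · simp only [Function.update_self]
        omega
      · simp [Function.update_of_ne ht]
    · intro c hc
      funext t
      rcases eq_or_ne t i with rfl | ht
      · simp only [Function.update_self]
        omega
      · simp [Function.update_of_ne ht]
    · intro c hc
      rw [Finset.mem_filter, Finset.Nat.mem_antidiagonalTuple] at hc
      obtain ⟨hsum, hne⟩ := hc
      have hci : 1 ≤ c i := Nat.one_le_iff_ne_zero.mpr hne
      have hcoef : ((Function.update c i (c i - 1) i : ℕ) : ℤ) + 1 = (c i : ℤ) := by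
        rw [Function.update_self]; omega
      show MvPolynomial.C ((c i : ℤ)) * ∏ t : Fin n, X t ^ c t
        = X i * (MvPolynomial.C (((Function.update c i (c i - 1) i : ℕ) : ℤ) + 1)
            * ∏ t : Fin n, X t ^ Function.update c i (c i - 1) t)
      rw [hcoef]
      simp_rw [Function.apply_update (fun t x => (X t : MvPolynomial (Fin n) ℤ) ^ x) c]
      rw [Finset.prod_update_of_mem (Finset.mem_univ i)]
      rw [← Finset.mul_prod_erase Finset.univ (fun t => X t ^ c t) (Finset.mem_univ i)]
      rw [← Finset.erase_eq]
      obtain ⟨k, hk⟩ : ∃ k, c i = k + 1 := ⟨c i - 1, by omega⟩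
      rw [hk]
      simp only [Nat.add_sub_cancel, pow_succ]
      ring

lemma gtld_closed (n : ℕ) (i : Fin n) (j : ℕ) :
    gtldPow n i j = ∑ m ∈ Finset.range (j + 1), X i ^ (j - m) * hA n m := by
  induction j with
  | zero => simp [gtld_zero, hA_zero]
  | succ j ih =>
      rw [gtld_succ, ih, Finset.mul_sum, Finset.range_add_one (n := j + 1),
        Finset.sum_insert (by simp)]
      rw [Nat.sub_self, pow_zero, one_mul, add_comm]
      congr 1
      refine Finset.sum_congr rfl fun m hm => ?_
      rw [Finset.mem_range] at hm
      rw [← mul_assoc, ← pow_succ']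
      congr 2
      omega

section PS
open PowerSeries

noncomputable def G (n : ℕ) (i : Fin n) : PowerSeries (MvPolynomial (Fin n) ℤ) :=
  PowerSeries.mk fun m => X i ^ m

lemma geom_inv (n : ℕ) (i : Fin n) :
    (1 - PowerSeries.C (X i) * PowerSeries.X) * G n i = 1 := by
  ext k
  rw [sub_mul, one_mul, mul_assoc]
  cases k with
  | zero => simp [G]
  | succ k =>
      simp only [map_sub, PowerSeries.coeff_C_mul, PowerSeries.coeff_succ_X_mul, G,
        PowerSeries.coeff_mk, PowerSeries.coeff_one]
      simp [pow_succ']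

lemma coeff_G_prod (n m : ℕ) :
    PowerSeries.coeff m (∏ i : Fin n, G n i) = hA n m := by
  rw [PowerSeries.coeff_prod, hA]
  refine Finset.sum_bij' (fun l _ => (l : Fin n → ℕ))
    (fun c _ => Finsupp.equivFunOnFinite.symm c) ?_ ?_ ?_ ?_ ?_
  · intro l hl
    rw [Finset.mem_finsuppAntidiag] at hl
    rw [Finset.Nat.mem_antidiagonalTuple]
    show (∑ t : Fin n, l t) = m
    exact hl.1
  · intro c hc
    rw [Finset.mem_finsuppAntidiag]
    refine ⟨?_, Finset.subset_univ _⟩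
    show (∑ t : Fin n, (Finsupp.equivFunOnFinite.symm c) t) = m
    simpa using Finset.Nat.mem_antidiagonalTuple.mp hc
  · intro l _; exact Finsupp.equivFunOnFinite.symm_apply_apply l
  · intro c _; exact Finsupp.equivFunOnFinite.apply_symm_apply c
  · intro l _
    refine Finset.prod_congr rfl fun t _ => ?_
    rw [G, PowerSeries.coeff_mk]

noncomputable def E (n : ℕ) : Polynomial (MvPolynomial (Fin n) ℤ) :=
  ∏ i : Fin n, (1 - Polynomial.C (X i) * Polynomial.X)

lemma E_natDegree (n : ℕ) : (E n).natDegree ≤ n := by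
  refine le_trans (Polynomial.natDegree_prod_le _ _) ?_
  have : ∀ i : Fin n, (1 - Polynomial.C (X i : MvPolynomial (Fin n) ℤ) * Polynomial.X).natDegree ≤ 1 := by
    intro i
    refine le_trans (Polynomial.natDegree_sub_le _ _) ?_
    have h2 : (Polynomial.C (X i : MvPolynomial (Fin n) ℤ) * Polynomial.X).natDegree ≤ 1 := by
      refine le_trans (Polynomial.natDegree_mul_le) ?_
      simp [Polynomial.natDegree_C]
    simpa using h2
  refine le_trans (Finset.sum_le_sum fun i (_ : i ∈ Finset.univ) => this i) (by simp)

lemma E_coeff_zero (n : ℕ) : (E n).coeff 0 = 1 := by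
  have : (E n).coeff 0 = Polynomial.constantCoeff (E n) := rfl
  rw [this, E, map_prod]
  simp

lemma E_mul_G (n : ℕ) : ((E n : Polynomial _) : PowerSeries (MvPolynomial (Fin n) ℤ)) * ∏ i : Fin n, G n i = 1 := by
  rw [E, ← Polynomial.coeToPowerSeries.ringHom_apply, map_prod, ← Finset.prod_mul_distrib]
  refine Finset.prod_eq_one fun t _ => ?_
  rw [← geom_inv n t]
  congr 1
  simp [Polynomial.coeToPowerSeries.ringHom_apply]

end PS

lemma hrel (n m : ℕ) (hm : 1 ≤ m) :
    ∑ p ∈ Finset.HasAntidiagonal.antidiagonal m, (E n).coeff p.1 * hsym n p.2 = 0 := by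
  have h := congrArg (PowerSeries.coeff m) (E_mul_G n)
  rw [PowerSeries.coeff_mul, PowerSeries.coeff_one, if_neg (by omega)] at h
  rw [← h]
  refine Finset.sum_congr rfl fun p _ => ?_
  rw [Polynomial.coeff_coe, coeff_G_prod, hA_eq_hsym]

lemma hsym_mem (n : ℕ) (I : Ideal (MvPolynomial (Fin n) ℤ))
    (hI : I = Ideal.span { p : MvPolynomial (Fin n) ℤ | ∃ m, 1 ≤ m ∧ m ≤ n + 1 ∧ p = hsym n m }) :
    ∀ m, 1 ≤ m → hsym n m ∈ I := by
  intro m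
  induction m using Nat.strong_induction_on with
  | _ m ih =>
    intro hm
    rcases le_or_gt m (n + 1) with hle | hgt
    · rw [hI]
      exact Ideal.subset_span ⟨m, hm, hle, rfl⟩
    · have h0 := hrel n m hm
      rw [← Finset.add_sum_erase _ _ (Finset.HasAntidiagonal.mem_antidiagonal.mpr (by omega : (0, m).1 + (0, m).2 = m))] at h0
      rw [E_coeff_zero, one_mul] at h0
      have hEq : hsym n m = -∑ p ∈ (Finset.HasAntidiagonal.antidiagonal m).erase (0, m), (E n).coeff p.1 * hsym n p.2 :=
        eq_neg_of_add_eq_zero_left h0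
      rw [hEq]
      refine neg_mem (Ideal.sum_mem _ fun p hp => ?_)
      rw [Finset.mem_erase, Finset.HasAntidiagonal.mem_antidiagonal] at hp
      obtain ⟨hne, hsum⟩ := hp
      rcases Nat.eq_zero_or_pos p.2 with h2 | h2
      · have : n < p.1 := by omega
        rw [Polynomial.coeff_eq_zero_of_natDegree_lt (lt_of_le_of_lt (E_natDegree n) this), zero_mul]
        exact Ideal.zero_mem _
      · have hp1 : p.1 ≠ 0 := by
          intro h
          exact hne (Prod.ext h (by omega))
        exact Ideal.mul_mem_left _ _ (ih p.2 (by omega) h2)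

theorem stmt13 (n : ℕ) (i : Fin n) (j : ℕ) (hn : 1 ≤ n) (hj : 1 ≤ j) :
    Ideal.Quotient.mk
        (Ideal.span { p : MvPolynomial (Fin n) ℤ | ∃ m, 1 ≤ m ∧ m ≤ n + 1 ∧ p = hsym n m })
        (gtldPow n i j)
      = Ideal.Quotient.mk
        (Ideal.span { p : MvPolynomial (Fin n) ℤ | ∃ m, 1 ≤ m ∧ m ≤ n + 1 ∧ p = hsym n m })
        (MvPolynomial.X i ^ (j - 1) * ((∑ t : Fin n, MvPolynomial.X t) + MvPolynomial.X i)) := by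
  set I := Ideal.span { p : MvPolynomial (Fin n) ℤ | ∃ m, 1 ≤ m ∧ m ≤ n + 1 ∧ p = hsym n m } with hI
  rw [Ideal.Quotient.mk_eq_mk_iff_sub_mem]
  have hS : (∑ t : Fin n, X t) = hsym n 1 := by
    rw [hsym_eq_hsymm, MvPolynomial.hsymm_one]
  have hpow : (X i : MvPolynomial (Fin n) ℤ) ^ (j - 1) * X i = X i ^ j := by
    rw [← pow_succ]
    congr 1
    omega
  have key : gtldPow n i j - X i ^ (j - 1) * ((∑ t : Fin n, X t) + X i)
      = (∑ m ∈ (Finset.range (j + 1)).erase 0, X i ^ (j - m) * hA n m)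
        - X i ^ (j - 1) * hsym n 1 := by
    rw [gtld_closed, ← Finset.add_sum_erase _ _ (Finset.mem_range.mpr (by omega : 0 < j + 1))]
    rw [hA_zero, ← hS, Nat.sub_zero, mul_one, mul_add, hpow]
    ring
  rw [key]
  refine Ideal.sub_mem _ (Ideal.sum_mem _ fun m hm => ?_)
    (Ideal.mul_mem_left _ _ (hsym_mem n I hI 1 le_rfl))
  rw [Finset.mem_erase] at hm
  rw [hA_eq_hsym]
  exact Ideal.mul_mem_left _ _ (hsym_mem n I hI m (Nat.one_le_iff_ne_zero.mpr hm.1))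
end

section
/- For every n ≥ 1, the sequence of multinomial-type sums P_n := Σ (-1)^{L(a)} · n!/(a_1!···a_n!), summed over all tuples (a_1,...,a_n) of non-negative integers with a_1+...+a_n = n satisfying the condition that a_{k-1} = 0 implies a_k = 0 for 2 ≤ k ≤ n (i.e., zeros only occur at the trailing end), where L(a) is the number of non-zero entries of a, satisfies P_n = (-1)^n. -/
open Finset

lemma mult_succ (m : ℕ) (a : Fin (m+1) → ℕ) :
    Nat.multinomial Finset.univ a
      = (∑ i, a i).choose (a 0) * Nat.multinomial Finset.univ (Fin.tail a) := by
  have hpos : 0 < ∏ i, (a i).factorial := Finset.prod_pos (fun i _ => Nat.factorial_pos _)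
  apply Nat.eq_of_mul_eq_mul_left hpos
  rw [Nat.multinomial_spec]
  have hspec := Nat.multinomial_spec Finset.univ (Fin.tail a)
  have hsum : ∑ i, a i = a 0 + ∑ i, Fin.tail a i := by
    rw [Fin.sum_univ_succ]; rfl
  have hprod : ∏ i, (a i).factorial = (a 0).factorial * ∏ i, (Fin.tail a i).factorial := by
    rw [Fin.prod_univ_succ]; rfl
  symm
  have hc := Nat.choose_mul_factorial_mul_factorial
    (Nat.le_add_right (a 0) (∑ i, Fin.tail a i))
  rw [hsum, hprod, Nat.add_sub_cancel_left] at *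
  calc (a 0).factorial * (∏ i, (Fin.tail a i).factorial)
        * ((a 0 + ∑ i, Fin.tail a i).choose (a 0) * Nat.multinomial Finset.univ (Fin.tail a))
      = (a 0 + ∑ i, Fin.tail a i).choose (a 0) * (a 0).factorial
          * ((∏ i, (Fin.tail a i).factorial) * Nat.multinomial Finset.univ (Fin.tail a)) := by
        ring
    _ = (a 0 + ∑ i, Fin.tail a i).choose (a 0) * (a 0).factorial
          * (∑ i, Fin.tail a i).factorial := by rw [hspec]
    _ = (a 0 + ∑ i, Fin.tail a i).factorial := hc

lemma cascade {m : ℕ} {a : Fin m → ℕ}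
    (P : ∀ k : Fin m, ∀ h : (k : ℕ) + 1 < m, a k = 0 → a ⟨(k : ℕ) + 1, h⟩ = 0)
    (hm : 0 < m) (h0 : a ⟨0, hm⟩ = 0) : ∀ i, a i = 0 := by
  have H : ∀ i : ℕ, ∀ hi : i < m, a ⟨i, hi⟩ = 0 := by
    intro i
    induction i with
    | zero => intro hi; exact h0
    | succ i ih =>
      intro hi
      exact P ⟨i, by omega⟩ hi (ih (by omega))
  exact fun i => by have := H i i.isLt; simpa using this

lemma key : ∀ s m : ℕ, s ≤ m →
    ∑ a ∈ (Finset.Nat.antidiagonalTuple m s).filter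
        (fun a => ∀ k : Fin m, ∀ h : (k : ℕ) + 1 < m, a k = 0 → a ⟨(k : ℕ) + 1, h⟩ = 0),
      (∏ i : Fin m, if a i ≠ 0 then (-1 : ℤ) else 1) * (Nat.multinomial Finset.univ a : ℤ)
      = (-1 : ℤ) ^ s := by
  intro s
  induction s using Nat.strong_induction_on with
  | _ s IH =>
  match s with
  | 0 =>
    intro m _
    rw [Finset.Nat.antidiagonalTuple_zero_right]
    have hfil : ({0} : Finset (Fin m → ℕ)).filter
        (fun a => ∀ k : Fin m, ∀ h : (k : ℕ) + 1 < m, a k = 0 → a ⟨(k : ℕ) + 1, h⟩ = 0)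
        = {0} := by
      rw [Finset.filter_singleton, if_pos]
      intro k h h0; rfl
    rw [hfil, Finset.sum_singleton]
    have hm : Nat.multinomial Finset.univ (0 : Fin m → ℕ) = 1 := by
      have := Nat.multinomial_spec Finset.univ (0 : Fin m → ℕ)
      simpa using this
    simp [hm]
  | s + 1 =>
    intro m hsm
    match m with
    | 0 => omega
    | m + 1 =>
    have hi : ∀ a ∈ (Finset.Nat.antidiagonalTuple (m+1) (s+1)).filter
        (fun a => ∀ k : Fin (m+1), ∀ h : (k : ℕ) + 1 < m+1, a k = 0 → a ⟨(k : ℕ) + 1, h⟩ = 0),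
        (⟨a 0, Fin.tail a⟩ : Σ _ : ℕ, (Fin m → ℕ)) ∈
          (Finset.Icc 1 (s+1)).sigma (fun j => (Finset.Nat.antidiagonalTuple m (s+1-j)).filter
            (fun b => ∀ k : Fin m, ∀ h : (k : ℕ) + 1 < m, b k = 0 → b ⟨(k : ℕ) + 1, h⟩ = 0)) := by
      intro a ha
      rw [Finset.mem_filter, Finset.Nat.mem_antidiagonalTuple] at ha
      obtain ⟨hsum, hP⟩ := ha
      have ha0 : a 0 ≠ 0 := by
        intro h
        have := cascade hP (by omega) (by simpa using h)
        rw [Finset.sum_eq_zero (fun i _ => this i)] at hsum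
        omega
      have hle : a 0 ≤ s + 1 := by
        rw [← hsum]
        exact Finset.single_le_sum (fun i _ => Nat.zero_le _) (Finset.mem_univ 0)
      rw [Finset.mem_sigma, Finset.mem_Icc, Finset.mem_filter,
        Finset.Nat.mem_antidiagonalTuple]
      dsimp only
      have h1le : 1 ≤ a 0 := by omega
      refine ⟨⟨h1le, hle⟩, ?_, ?_⟩
      · rw [Fin.sum_univ_succ] at hsum
        have heq : ∑ i : Fin m, Fin.tail a i = ∑ i : Fin m, a i.succ := rfl
        omega
      · intro k hk hzk
        have := hP ⟨(k : ℕ) + 1, by omega⟩ (by simpa using Nat.add_lt_add_right hk 0) hzk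
        exact this
    have hj : ∀ p ∈ (Finset.Icc 1 (s+1)).sigma
        (fun j => (Finset.Nat.antidiagonalTuple m (s+1-j)).filter
          (fun b => ∀ k : Fin m, ∀ h : (k : ℕ) + 1 < m, b k = 0 → b ⟨(k : ℕ) + 1, h⟩ = 0)),
        Fin.cons p.1 p.2 ∈ (Finset.Nat.antidiagonalTuple (m+1) (s+1)).filter
          (fun a => ∀ k : Fin (m+1), ∀ h : (k : ℕ) + 1 < m+1, a k = 0 → a ⟨(k : ℕ) + 1, h⟩ = 0) := by
      rintro ⟨j, b⟩ hp
      rw [Finset.mem_sigma, Finset.mem_Icc, Finset.mem_filter,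
        Finset.Nat.mem_antidiagonalTuple] at hp
      dsimp only at hp ⊢
      obtain ⟨⟨hj1, hj2⟩, hbsum, hbP⟩ := hp
      rw [Finset.mem_filter, Finset.Nat.mem_antidiagonalTuple]
      constructor
      · rw [Fin.sum_univ_succ, Fin.cons_zero]
        have heq : ∑ i : Fin m, (Fin.cons j b : Fin (m+1) → ℕ) i.succ = ∑ i : Fin m, b i := by
          apply Finset.sum_congr rfl; intro i _; rw [Fin.cons_succ]
        omega
      · intro k hk h0
        induction k using Fin.cases with
        | zero => rw [Fin.cons_zero] at h0; omega
        | succ k' =>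
          rw [Fin.cons_succ] at h0
          have hk' : (k' : ℕ) + 1 < m := by simpa using hk
          have hres := hbP k' hk' h0
          have heq : (⟨((Fin.succ k' : Fin (m+1)) : ℕ) + 1, hk⟩ : Fin (m+1))
              = Fin.succ ⟨(k' : ℕ) + 1, hk'⟩ := by
            apply Fin.ext; simp
          rw [heq, Fin.cons_succ]
          exact hres
    have hvals : ∀ a ∈ (Finset.Nat.antidiagonalTuple (m+1) (s+1)).filter
        (fun a => ∀ k : Fin (m+1), ∀ h : (k : ℕ) + 1 < m+1, a k = 0 → a ⟨(k : ℕ) + 1, h⟩ = 0),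
        (∏ i : Fin (m+1), if a i ≠ 0 then (-1 : ℤ) else 1) * (Nat.multinomial Finset.univ a : ℤ)
          = ((s+1).choose (a 0) : ℤ) * (-1) *
            ((∏ i : Fin m, if Fin.tail a i ≠ 0 then (-1 : ℤ) else 1)
              * (Nat.multinomial Finset.univ (Fin.tail a) : ℤ)) := by
      intro a ha
      rw [Finset.mem_filter, Finset.Nat.mem_antidiagonalTuple] at ha
      obtain ⟨hsum, hP⟩ := ha
      have ha0 : a 0 ≠ 0 := by
        intro h
        have := cascade hP (by omega) (by simpa using h)
        rw [Finset.sum_eq_zero (fun i _ => this i)] at hsum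
        omega
      have hprod : (∏ i : Fin (m+1), if a i ≠ 0 then (-1 : ℤ) else 1)
          = (-1) * ∏ i : Fin m, if Fin.tail a i ≠ 0 then (-1 : ℤ) else 1 := by
        rw [Fin.prod_univ_succ, if_pos ha0]; rfl
      rw [hprod, mult_succ, hsum]
      push_cast
      ring
    have hmain := Finset.sum_nbij'
      (i := fun (a : Fin (m+1) → ℕ) => (⟨a 0, Fin.tail a⟩ : Σ _ : ℕ, (Fin m → ℕ)))
      (j := fun p => Fin.cons p.1 p.2)
      (f := fun a => (∏ i : Fin (m+1), if a i ≠ 0 then (-1 : ℤ) else 1)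
        * (Nat.multinomial Finset.univ a : ℤ))
      (g := fun p => ((s+1).choose p.1 : ℤ) * (-1) *
        ((∏ i : Fin m, if p.2 i ≠ 0 then (-1 : ℤ) else 1)
          * (Nat.multinomial Finset.univ p.2 : ℤ)))
      hi hj (fun a _ => Fin.cons_self_tail a) (fun p _ => by exact Sigma.ext (by simp) (by simp))
      hvals
    rw [hmain, Finset.sum_sigma]
    clear hmain hi hj hvals
    have hinner : ∀ j ∈ Finset.Icc 1 (s+1),
        (∑ b ∈ (Finset.Nat.antidiagonalTuple m (s+1-j)).filter
          (fun b => ∀ k : Fin m, ∀ h : (k : ℕ) + 1 < m, b k = 0 → b ⟨(k : ℕ) + 1, h⟩ = 0),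
          ((s+1).choose j : ℤ) * (-1) *
            ((∏ i : Fin m, if b i ≠ 0 then (-1 : ℤ) else 1)
              * (Nat.multinomial Finset.univ b : ℤ)))
        = ((s+1).choose j : ℤ) * (-1) * (-1)^(s+1-j) := by
      intro j hj'
      rw [Finset.mem_Icc] at hj'
      have hlt : s+1-j < s+1 := by omega
      have hle : s+1-j ≤ m := by omega
      rw [← Finset.mul_sum, IH (s+1-j) hlt m hle]
    rw [Finset.sum_congr rfl hinner]
    have hins : Finset.range (s+2) = insert 0 (Finset.Icc 1 (s+1)) := by
      ext x; simp only [Finset.mem_Icc, Finset.mem_range, Finset.mem_insert]; omega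
    have h0 : ∑ j ∈ Finset.range (s+2), ((s+1).choose j : ℤ) * (-1)^(s+1-j) = 0 := by
      rw [← Finset.sum_range_reflect]
      have hcong : ∀ j ∈ Finset.range (s+2),
          ((s+1).choose (s+2-1-j) : ℤ) * (-1)^(s+1-(s+2-1-j)) = (-1)^j * (s+1).choose j := by
        intro j hj'
        rw [Finset.mem_range] at hj'
        have e0 : s+2-1-j = s+1-j := by omega
        have e1 : j ≤ s + 1 := by omega
        have e2 : s+1-(s+1-j) = j := by omega
        rw [e0, Nat.choose_symm e1, e2]
        ring
      rw [Finset.sum_congr rfl hcong]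
      exact Int.alternating_sum_range_choose_of_ne (by omega)
    rw [hins, Finset.sum_insert (by simp)] at h0
    have h1 : ∑ j ∈ Finset.Icc 1 (s+1), ((s+1).choose j : ℤ) * (-1)^(s+1-j)
        = -(-1)^(s+1) := by
      simp only [Nat.choose_zero_right, Nat.cast_one, one_mul, Nat.sub_zero] at h0
      linarith
    calc ∑ j ∈ Finset.Icc 1 (s+1), ((s+1).choose j : ℤ) * (-1) * (-1)^(s+1-j)
        = (-1) * ∑ j ∈ Finset.Icc 1 (s+1), ((s+1).choose j : ℤ) * (-1)^(s+1-j) := by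
          rw [Finset.mul_sum]; apply Finset.sum_congr rfl; intro j _; ring
      _ = (-1 : ℤ)^(s+1) := by rw [h1]; ring

theorem stmt14 (n : ℕ) (hn : 1 ≤ n) :
    ∑ a ∈ (Finset.Nat.antidiagonalTuple n n).filter
        (fun a => ∀ k : Fin n, ∀ h : (k : ℕ) + 1 < n, a k = 0 → a ⟨(k : ℕ) + 1, h⟩ = 0),
      (-1 : ℤ) ^ ((Finset.univ.filter fun i : Fin n => a i ≠ 0).card) *
        ((n.factorial / ∏ i : Fin n, (a i).factorial : ℕ) : ℤ)
      = (-1 : ℤ) ^ n := by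
  rw [← key n n le_rfl]
  apply Finset.sum_congr rfl
  intro a ha
  rw [Finset.mem_filter, Finset.Nat.mem_antidiagonalTuple] at ha
  obtain ⟨hsum, -⟩ := ha
  congr 1
  · rw [← Finset.prod_const, Finset.prod_filter]
  · congr 1
    have hspec := Nat.multinomial_spec Finset.univ a
    rw [hsum] at hspec
    rw [← hspec, Nat.mul_div_cancel_left _ (Finset.prod_pos (fun i _ => Nat.factorial_pos _))]
end

section
/- For n ≥ 1 and 1 ≤ c, the single-variable instance of the key cancellation: Σ over tuples (a_1,...,a_c) of non-negative integers with a_1+...+a_c = c-1, satisfying a_{k-1}=0 ⟹ a_k=0 for 2 ≤ k ≤ c, of (-1)^{1+L(a)} · c!/(a_1!···a_c!) equals c·(-1)^c, where L(a) is the number of non-zero entries. -/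
open Finset

/-- Multinomial-cons identity for the truncated weight. -/
lemma wcons_aux {d : ℕ} (k m : ℕ) (t : Fin d → ℕ) (ht : ∑ i, t i = m) :
    ((k + m).factorial / ∏ i : Fin (d + 1), ((Fin.cons k t : Fin (d+1) → ℕ) i).factorial : ℕ)
      = (k + m).choose k * (m.factorial / ∏ i : Fin d, (t i).factorial) := by
  have hdvd : (∏ i : Fin d, (t i).factorial) ∣ m.factorial := by
    rw [← ht]; exact Nat.prod_factorial_dvd_factorial_sum _ _
  have hprod : (∏ i : Fin (d + 1), ((Fin.cons k t : Fin (d+1) → ℕ) i).factorial)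
      = k.factorial * ∏ i : Fin d, (t i).factorial := by
    rw [Fin.prod_univ_succ, Fin.cons_zero]
    simp only [Fin.cons_succ]
  rw [hprod]
  have hpos : 0 < k.factorial * ∏ i : Fin d, (t i).factorial :=
    Nat.mul_pos k.factorial_pos (Finset.prod_pos fun i _ => (t i).factorial_pos)
  refine Nat.div_eq_of_eq_mul_left hpos ?_
  have h1 : (k + m).choose k * k.factorial * m.factorial = (k + m).factorial := by
    have := Nat.choose_mul_factorial_mul_factorial (Nat.le_add_right k m)
    simpa [Nat.add_sub_cancel_left] using this
  calc (k + m).factorial = (k + m).choose k * k.factorial * m.factorial := h1.symm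
    _ = (k + m).choose k * k.factorial *
          ((∏ i : Fin d, (t i).factorial) * (m.factorial / ∏ i : Fin d, (t i).factorial)) := by
        rw [Nat.mul_div_cancel' hdvd]
    _ = (k + m).choose k * (m.factorial / ∏ i : Fin d, (t i).factorial) *
          (k.factorial * ∏ i : Fin d, (t i).factorial) := by ring

lemma key18 : ∀ n : ℕ, ∀ c : ℕ, n < c →
    ∑ a ∈ (Finset.Nat.antidiagonalTuple c n).filter
        (fun a => ∀ k : Fin c, ∀ h : (k : ℕ) + 1 < c, a k = 0 → a ⟨(k : ℕ) + 1, h⟩ = 0),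
      (-1 : ℤ) ^ ((Finset.univ.filter fun i : Fin c => a i ≠ 0).card) *
        ((n.factorial / ∏ i : Fin c, (a i).factorial : ℕ) : ℤ)
      = (-1 : ℤ) ^ n := by
  intro n
  induction n using Nat.strong_induction_on with
  | _ n ih =>
    intro c hnc
    match n, c, hnc with
    | 0, c, hnc =>
      rw [Finset.Nat.antidiagonalTuple_zero_right]
      rw [Finset.filter_singleton, if_pos (by intro k h hk; rfl)]
      simp
    | (m+1), 0, hnc => exact absurd hnc (by omega)
    | (m+1), (d+1), hnc =>
      set n := m + 1 with hn
      have hn1 : 1 ≤ n := Nat.le_add_left 1 m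
      have hdn : n ≤ d := Nat.lt_succ_iff.mp hnc
      have hd1 : 1 ≤ d := le_trans hn1 hdn
      -- zero propagation
      have zero_prop : ∀ (a : Fin (d+1) → ℕ),
          (∀ k : Fin (d+1), ∀ h : (k : ℕ) + 1 < d+1, a k = 0 → a ⟨(k : ℕ) + 1, h⟩ = 0) →
          a 0 = 0 → ∀ i : Fin (d+1), a i = 0 := by
        intro a hP h0 i
        obtain ⟨j, hj⟩ := i
        induction j with
        | zero => exact h0
        | succ p iph =>
          have hp : p < d + 1 := Nat.lt_of_succ_lt hj
          exact hP ⟨p, hp⟩ hj (iph hp)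
      -- set decomposition
      have hset : (Finset.Nat.antidiagonalTuple (d+1) n).filter
            (fun a => ∀ k : Fin (d+1), ∀ h : (k : ℕ) + 1 < d+1, a k = 0 → a ⟨(k : ℕ) + 1, h⟩ = 0)
          = (Finset.Icc 1 n).biUnion (fun k =>
              ((Finset.Nat.antidiagonalTuple d (n - k)).filter
                (fun a => ∀ j : Fin d, ∀ h : (j : ℕ) + 1 < d, a j = 0 → a ⟨(j : ℕ) + 1, h⟩ = 0)).image
                (Fin.cons k)) := by
        ext a
        simp only [Finset.mem_filter, Finset.Nat.mem_antidiagonalTuple, Finset.mem_biUnion,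
          Finset.mem_Icc, Finset.mem_image]
        constructor
        · rintro ⟨hsum, hP⟩
          have h0 : a 0 ≠ 0 := by
            intro h0
            have hz := zero_prop a hP h0
            rw [Finset.sum_congr rfl (fun i _ => hz i)] at hsum
            simp at hsum
          have hsum' : a 0 + ∑ i : Fin d, a i.succ = n := by
            rw [← Fin.sum_univ_succ]; exact hsum
          refine ⟨a 0, ⟨Nat.one_le_iff_ne_zero.2 h0, by omega⟩, Fin.tail a, ⟨⟨?_, ?_⟩,
            Fin.cons_self_tail a⟩⟩
          · show ∑ i : Fin d, a i.succ = n - a 0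
            omega
          · intro j h hj
            have h2 : (j : ℕ) + 1 < d + 1 := by omega
            have e1 : Fin.tail a j = a ⟨(j : ℕ) + 1, h2⟩ := rfl
            have e2 : Fin.tail a ⟨(j : ℕ) + 1, h⟩ = a ⟨(j : ℕ) + 2, by omega⟩ := rfl
            rw [e2]
            exact hP ⟨(j : ℕ) + 1, h2⟩ (by simp only [Fin.val_mk]; omega) (e1 ▸ hj)
        · rintro ⟨k, ⟨hk1, hkn⟩, t, ⟨hts, htP⟩, rfl⟩
          constructor
          · rw [Fin.sum_univ_succ, Fin.cons_zero]
            simp only [Fin.cons_succ]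
            omega
          · rintro ⟨jv, hjv⟩ h hj
            match jv, hjv with
            | 0, hjv =>
              rw [show ((⟨0, hjv⟩ : Fin (d+1))) = 0 from rfl, Fin.cons_zero] at hj
              omega
            | (p+1), hjv =>
              have hpd : p < d := by omega
              have hj' : t ⟨p, hpd⟩ = 0 := by
                rw [show ((⟨p+1, hjv⟩ : Fin (d+1))) = (⟨p, hpd⟩ : Fin d).succ from rfl,
                  Fin.cons_succ] at hj
                exact hj
              have hpd2 : p + 1 < d := by
                simpa using h
              exact (Fin.cons_succ (α := fun _ : Fin (d+1) => ℕ) k t (⟨p+1, hpd2⟩ : Fin d)).trans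
                (htP ⟨p, hpd⟩ hpd2 hj')
      rw [hset]
      rw [Finset.sum_biUnion ?hdisj]
      case hdisj =>
        intro k _ k' _ hkk'
        simp only [Function.onFun]
        rw [Finset.disjoint_left]
        rintro a ha ha'
        rw [Finset.mem_image] at ha ha'
        obtain ⟨t, _, rfl⟩ := ha
        obtain ⟨t', _, he⟩ := ha'
        apply hkk'
        have := congrFun he 0
        rw [Fin.cons_zero, Fin.cons_zero] at this
        exact this.symm
      have hterm : ∀ k ∈ Finset.Icc 1 n,
          (∑ a ∈ ((Finset.Nat.antidiagonalTuple d (n - k)).filter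
            (fun a => ∀ j : Fin d, ∀ h : (j : ℕ) + 1 < d, a j = 0 → a ⟨(j : ℕ) + 1, h⟩ = 0)).image
              (Fin.cons k),
            (-1 : ℤ) ^ ((Finset.univ.filter fun i : Fin (d+1) => a i ≠ 0).card) *
              ((n.factorial / ∏ i : Fin (d+1), (a i).factorial : ℕ) : ℤ))
          = -(n.choose k) * (-1 : ℤ) ^ (n - k) := by
        intro k hk
        rw [Finset.mem_Icc] at hk
        have hinj : ∀ x ∈ (Finset.Nat.antidiagonalTuple d (n - k)).filter
            (fun a => ∀ j : Fin d, ∀ h : (j : ℕ) + 1 < d, a j = 0 → a ⟨(j : ℕ) + 1, h⟩ = 0),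
            ∀ y ∈ (Finset.Nat.antidiagonalTuple d (n - k)).filter
            (fun a => ∀ j : Fin d, ∀ h : (j : ℕ) + 1 < d, a j = 0 → a ⟨(j : ℕ) + 1, h⟩ = 0),
            (Fin.cons k x : Fin (d+1) → ℕ) = Fin.cons k y → x = y :=
          fun x _ y _ h => funext fun i => by
            have := congrFun h i.succ
            simpa using this
        rw [Finset.sum_image hinj]
        have hstep : ∀ t ∈ (Finset.Nat.antidiagonalTuple d (n - k)).filter
            (fun a => ∀ j : Fin d, ∀ h : (j : ℕ) + 1 < d, a j = 0 → a ⟨(j : ℕ) + 1, h⟩ = 0),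
            (-1 : ℤ) ^ ((Finset.univ.filter fun i : Fin (d+1) => (Fin.cons k t : Fin (d+1) → ℕ) i ≠ 0).card) *
              ((n.factorial / ∏ i : Fin (d+1), ((Fin.cons k t : Fin (d+1) → ℕ) i).factorial : ℕ) : ℤ)
            = (-(n.choose k)) *
              ((-1 : ℤ) ^ ((Finset.univ.filter fun i : Fin d => t i ≠ 0).card) *
                (((n - k).factorial / ∏ i : Fin d, (t i).factorial : ℕ) : ℤ)) := by
          intro t ht
          rw [Finset.mem_filter, Finset.Nat.mem_antidiagonalTuple] at ht
          have hcard : (Finset.univ.filter fun i : Fin (d+1) => (Fin.cons k t : Fin (d+1) → ℕ) i ≠ 0).card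
              = ((Finset.univ.filter fun i : Fin d => t i ≠ 0).card) + 1 := by
            rw [Finset.card_filter, Finset.card_filter, Fin.sum_univ_succ, Fin.cons_zero]
            simp only [Fin.cons_succ]
            rw [if_pos (by omega : k ≠ 0)]
            omega
          have hW : (n.factorial / ∏ i : Fin (d+1), ((Fin.cons k t : Fin (d+1) → ℕ) i).factorial : ℕ)
              = n.choose k * ((n - k).factorial / ∏ i : Fin d, (t i).factorial) := by
            have := wcons_aux k (n - k) t ht.1
            rw [show k + (n - k) = n by omega] at this
            exact this
          rw [hcard, hW, pow_succ]
          push_cast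
          ring
        rw [Finset.sum_congr rfl hstep, ← Finset.mul_sum]
        rw [ih (n - k) (by omega) d (by omega)]
      rw [Finset.sum_congr rfl hterm]
      -- final binomial computation
      have hrange : Finset.range (n + 1) = insert 0 (Finset.Icc 1 n) := by
        ext x
        simp only [Finset.mem_range, Finset.mem_insert, Finset.mem_Icc]
        omega
      have halt : ∑ k ∈ Finset.range (n + 1), (-1 : ℤ) ^ (n - k) * n.choose k = 0 := by
        rw [← Finset.sum_range_reflect]
        simp only [Nat.add_sub_cancel]
        have : ∀ j ∈ Finset.range (n + 1),
            (-1 : ℤ) ^ (n - (n - j)) * (n.choose (n - j) : ℤ)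
              = (-1 : ℤ) ^ j * (n.choose j : ℤ) := by
          intro j hj
          rw [Finset.mem_range] at hj
          rw [show n - (n - j) = j by omega, Nat.choose_symm (by omega : j ≤ n)]
        rw [Finset.sum_congr rfl this, Int.alternating_sum_range_choose, if_neg (by omega)]
      rw [hrange, Finset.sum_insert (by simp)] at halt
      simp only [Nat.sub_zero, Nat.choose_zero_right, Nat.cast_one, mul_one] at halt
      have : ∑ k ∈ Finset.Icc 1 n, -(n.choose k : ℤ) * (-1 : ℤ) ^ (n - k)
          = -∑ k ∈ Finset.Icc 1 n, (-1 : ℤ) ^ (n - k) * (n.choose k : ℤ) := by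
        rw [← Finset.sum_neg_distrib]
        exact Finset.sum_congr rfl fun k _ => by ring
      rw [this]
      linarith [halt]

theorem stmt18 (c : ℕ) (hc : 1 ≤ c) :
    ∑ a ∈ (Finset.Nat.antidiagonalTuple c (c - 1)).filter
        (fun a => ∀ k : Fin c, ∀ h : (k : ℕ) + 1 < c, a k = 0 → a ⟨(k : ℕ) + 1, h⟩ = 0),
      (-1 : ℤ) ^ (1 + (Finset.univ.filter fun i : Fin c => a i ≠ 0).card) *
        ((c.factorial / ∏ i : Fin c, (a i).factorial : ℕ) : ℤ)
      = (c : ℤ) * (-1 : ℤ) ^ c := by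
  have hterm : ∀ a ∈ (Finset.Nat.antidiagonalTuple c (c - 1)).filter
      (fun a => ∀ k : Fin c, ∀ h : (k : ℕ) + 1 < c, a k = 0 → a ⟨(k : ℕ) + 1, h⟩ = 0),
      (-1 : ℤ) ^ (1 + (Finset.univ.filter fun i : Fin c => a i ≠ 0).card) *
        ((c.factorial / ∏ i : Fin c, (a i).factorial : ℕ) : ℤ)
      = ((c : ℤ) * (-1)) *
        ((-1 : ℤ) ^ ((Finset.univ.filter fun i : Fin c => a i ≠ 0).card) *
          (((c - 1).factorial / ∏ i : Fin c, (a i).factorial : ℕ) : ℤ)) := by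
    intro a ha
    rw [Finset.mem_filter, Finset.Nat.mem_antidiagonalTuple] at ha
    have hdvd : (∏ i : Fin c, (a i).factorial) ∣ (c - 1).factorial := by
      rw [← ha.1]; exact Nat.prod_factorial_dvd_factorial_sum _ _
    have hfac : c.factorial = c * (c - 1).factorial := by
      obtain ⟨e, rfl⟩ := Nat.exists_eq_add_of_le hc
      simp [Nat.factorial_succ, Nat.add_comm]
    have hdiv : (c.factorial / ∏ i : Fin c, (a i).factorial : ℕ)
        = c * ((c - 1).factorial / ∏ i : Fin c, (a i).factorial) := by
      rw [hfac, Nat.mul_div_assoc c hdvd]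
    rw [hdiv, pow_add, pow_one]
    push_cast
    ring
  rw [Finset.sum_congr rfl hterm, ← Finset.mul_sum, key18 (c - 1) c (by omega)]
  have : (-1 : ℤ) * (-1 : ℤ) ^ (c - 1) = (-1 : ℤ) ^ c := by
    rw [← pow_succ']
    congr 1
    omega
  rw [mul_assoc, this]
end

section
/- Over Z, the set G = {Φ(1,1), Φ(2,2), ..., Φ(n,n)} in Z[x_1,...,x_n], where Φ(k,k) is the sum of all monomials of degree k in x_1,...,x_{n-k+1}, has the property that the leading monomial of Φ(k,k) with respect to the lexicographic order with x_1 < x_2 < ... < x_n is x_{n-k+1}^k, and these leading monomials are pairwise coprime. -/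
/-- `Φ(k, k)`: the sum of all monomials of degree `k` in the variables
`x_1, …, x_{n-k+1}` of `ℤ[x_1, …, x_n]`. -/
noncomputable def PhiD (n k : ℕ) : MvPolynomial (Fin n) ℤ :=
  ∑ m ∈ (Finset.univ.filter fun i : Fin n => (i : ℕ) < n - k + 1).sym k,
    ((m : Multiset (Fin n)).map MvPolynomial.X).prod

open MvPolynomial

lemma prod_map_X {n : ℕ} (m : Multiset (Fin n)) :
    ((m.map MvPolynomial.X).prod : MvPolynomial (Fin n) ℤ)
      = monomial (Multiset.toFinsupp m) 1 := by
  induction m using Multiset.induction with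
  | empty => simp [monomial_eq]
  | cons a s ih =>
      simp only [Multiset.map_cons, Multiset.prod_cons, ih]
      rw [X, monomial_mul]
      congr 1
      rw [← Multiset.singleton_add, Multiset.toFinsupp_add, Multiset.toFinsupp_singleton]

lemma coeff_PhiD {n k : ℕ} (d : Fin n →₀ ℕ) :
    MvPolynomial.coeff d (PhiD n k) =
      if ∃ m ∈ (Finset.univ.filter fun i : Fin n => (i : ℕ) < n - k + 1).sym k,
          Multiset.toFinsupp (m : Multiset (Fin n)) = d then 1 else 0 := by
  classical
  unfold PhiD
  simp only [prod_map_X]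
  rw [MvPolynomial.coeff_sum]
  simp only [MvPolynomial.coeff_monomial]
  split
  · next h =>
      obtain ⟨m, hm, hmd⟩ := h
      rw [Finset.sum_eq_single m]
      · simp [hmd]
      · intro b hb hbm
        have : Multiset.toFinsupp (b : Multiset (Fin n)) ≠ d := by
          intro hbd
          apply hbm
          have := Multiset.toFinsupp.injective (hbd.trans hmd.symm)
          exact Sym.coe_injective this
        simp [this]
      · intro h; exact absurd hm h
  · next h =>
      push_neg at h
      apply Finset.sum_eq_zero
      intro m hm
      simp [h m hm]

theorem stmt19 (n : ℕ) (hn : 1 ≤ n) :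
    (∀ k, ∀ hk : 1 ≤ k, ∀ hkn : k ≤ n,
      -- the monomial x_{n-k+1}^k occurs in Φ(k,k) with coefficient 1 …
      MvPolynomial.coeff (Finsupp.single (⟨n - k, by omega⟩ : Fin n) k) (PhiD n k) = 1
      -- … and it is the lex-leading monomial (x_1 < x_2 < ⋯ < x_n, so the most
      -- significant variable is x_n): every other exponent vector in the support
      -- is lex-smaller.
      ∧ ∀ e ∈ (PhiD n k).support, e ≠ Finsupp.single (⟨n - k, by omega⟩ : Fin n) k →
          ∃ i : Fin n, e i < (Finsupp.single (⟨n - k, by omega⟩ : Fin n) k : Fin n →₀ ℕ) i ∧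
            ∀ j : Fin n, i < j →
              e j = (Finsupp.single (⟨n - k, by omega⟩ : Fin n) k : Fin n →₀ ℕ) j)
    ∧
    -- the leading monomials are pairwise coprime: their variable supports are disjoint
    (∀ k k', ∀ hk : 1 ≤ k, ∀ hkn : k ≤ n, ∀ hk' : 1 ≤ k', ∀ hk'n : k' ≤ n, k ≠ k' →
      Disjoint (Finsupp.single (⟨n - k, by omega⟩ : Fin n) k : Fin n →₀ ℕ).support
        (Finsupp.single (⟨n - k', by omega⟩ : Fin n) k' : Fin n →₀ ℕ).support) := by
  classical
  constructor
  · intro k hk hkn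
    set i0 : Fin n := ⟨n - k, by omega⟩ with hi0
    constructor
    · rw [coeff_PhiD]
      rw [if_pos]
      refine ⟨Sym.mk (Multiset.replicate k i0) (by simp), ?_, ?_⟩
      · rw [Finset.mem_sym_iff]
        intro a ha
        have : a = i0 := Multiset.eq_of_mem_replicate ha
        simp [this, hi0]
      · show Multiset.toFinsupp (Multiset.replicate k i0) = _
        ext b
        rw [Multiset.toFinsupp_apply, Multiset.count_replicate, Finsupp.single_apply]
    · intro e he hne
      rw [MvPolynomial.mem_support_iff, coeff_PhiD] at he
      have hex : ∃ m ∈ (Finset.univ.filter fun i : Fin n => (i : ℕ) < n - k + 1).sym k,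
          Multiset.toFinsupp (m : Multiset (Fin n)) = e := by
        by_contra h; rw [if_neg h] at he; exact he rfl
      obtain ⟨m, hm, hme⟩ := hex
      rw [Finset.mem_sym_iff] at hm
      -- every element of m has index ≤ n - k
      have hvar : ∀ j : Fin n, (n - k : ℕ) < j → e j = 0 := by
        intro j hj
        rw [← hme]
        simp only [Multiset.toFinsupp_apply]
        rw [Multiset.count_eq_zero]
        intro hjm
        have := hm j hjm
        simp at this
        omega
      -- total degree is k
      have hsum : (Finset.univ : Finset (Fin n)).sum e = k := by
        rw [← hme]
        have : ∀ a : Fin n, Multiset.toFinsupp (m : Multiset (Fin n)) a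
            = (m : Multiset (Fin n)).count a := fun a => Multiset.toFinsupp_apply _ _
        calc (Finset.univ : Finset (Fin n)).sum (Multiset.toFinsupp (m : Multiset (Fin n)))
            = ∑ a : Fin n, (m : Multiset (Fin n)).count a := by
              exact Finset.sum_congr rfl fun a _ => this a
          _ = Multiset.card (m : Multiset (Fin n)) := by
              rw [← Multiset.toFinset_sum_count_eq]
              refine (Finset.sum_subset (Finset.subset_univ _) ?_).symm
              intro x _ hx
              simp only [Multiset.mem_toFinset] at hx
              exact Multiset.count_eq_zero_of_notMem hx
          _ = k := m.2
      have hle : e i0 ≤ k := by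
        rw [← hsum]
        exact Finset.single_le_sum (fun a _ => Nat.zero_le _) (Finset.mem_univ i0)
      have hlt : e i0 < k := by
        rcases lt_or_eq_of_le hle with h | h
        · exact h
        · exfalso; apply hne
          ext j
          by_cases hj : j = i0
          · subst hj; simp [h]
          · rw [Finsupp.single_apply, if_neg (fun hh => hj hh.symm)]
            -- e j = 0 since sum = k and e i0 = k
            by_contra hej
            have h0 : 0 < e j := Nat.pos_of_ne_zero hej
            have hj' : j ∈ Finset.univ.erase i0 := Finset.mem_erase.mpr ⟨hj, Finset.mem_univ j⟩
            have h1 : 0 < (Finset.univ.erase i0).sum e :=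
              Finset.sum_pos' (fun a _ => Nat.zero_le _) ⟨j, hj', h0⟩
            have h2 : e i0 + (Finset.univ.erase i0).sum e
                = (Finset.univ : Finset (Fin n)).sum e :=
              Finset.add_sum_erase Finset.univ e (Finset.mem_univ i0)
            rw [hsum, h] at h2
            omega
      refine ⟨i0, ?_, ?_⟩
      · simpa using hlt
      · intro j hj
        have hjv : (n - k : ℕ) < j := hj
        rw [hvar j hjv, Finsupp.single_apply, if_neg]
        intro h; subst h; exact lt_irrefl _ hj
  · intro k k' hk hkn hk' hk'n hne
    rw [Finsupp.support_single_ne_zero _ (by omega), Finsupp.support_single_ne_zero _ (by omega)]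
    simp only [Finset.disjoint_singleton]
    intro h
    apply hne
    have := Fin.mk.injEq (n - k) _ (n - k') _ ▸ h
    have : n - k = n - k' := by simpa using congrArg Fin.val h
    omega
end
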